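/- For every t ≥ 0, ∫_0^t e^{A(t−u)} h hᵀ (e^{A(t−u)})ᵀ du = ((e^{2θt} − 1)/(2θ)) · [[1/θ², 1/θ], [1/θ, 1]] + ((e^{θt} − 1)/θ) · [[−2/θ², −1/θ], [−1/θ, 0]] + t · [[1/θ², 0], [0, 0]], an identity between 2×2 real matrices (summands written row-by-row). -/

import Mathlib

open Matrix

set_option maxRecDepth 4000 in
lemma expA (θ : ℝ) (hθ : θ ≠ 0) (s : ℝ) :
    NormedSpace.exp (s • !![0,(1:ℝ);0,θ])
      = !![1, (Real.exp (s*θ)-1)/θ; 0, Real.exp (s*θ)] := by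
  have hU : IsUnit (!![1,(1:ℝ);0,θ]) := by
    rw [Matrix.isUnit_iff_isUnit_det, Matrix.det_fin_two_of]
    simpa using hθ.isUnit
  have hUinv : (!![1,(1:ℝ);0,θ])⁻¹ = !![1, -θ⁻¹; 0, θ⁻¹] := by
    rw [Matrix.inv_def, Matrix.adjugate_fin_two, Matrix.det_fin_two_of]
    ext i j
    fin_cases i <;> fin_cases j <;>
      simp [Ring.inverse_eq_inv'] <;> field_simp
  have key : s • !![0,(1:ℝ);0,θ]
      = !![1,1;0,θ] * (Matrix.diagonal ![0, s*θ]) * (!![1,1;0,θ])⁻¹ := by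
    rw [hUinv]
    ext i j
    fin_cases i <;> fin_cases j <;>
      simp [Matrix.mul_apply, Fin.sum_univ_two, Matrix.vecMul, dotProduct,
        Matrix.diagonal_apply] <;> field_simp <;> ring
  have hpi : NormedSpace.exp (![0, s*θ] : Fin 2 → ℝ) = ![1, Real.exp (s*θ)] := by
    rw [Pi.exp_def]
    funext i
    fin_cases i
    · show NormedSpace.exp (0:ℝ) = 1
      exact NormedSpace.exp_zero
    · show NormedSpace.exp (s*θ) = Real.exp (s*θ)
      rw [← Real.exp_eq_exp_ℝ]
  rw [key, Matrix.exp_conj _ _ hU, Matrix.exp_diagonal, hUinv, hpi]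
  ext i j
  fin_cases i <;> fin_cases j <;>
    simp [Matrix.mul_apply, Fin.sum_univ_two, Matrix.vecMul, dotProduct,
      Matrix.diagonal_apply] <;> field_simp <;> ring

set_option maxRecDepth 8000 in
/-- For the Langevin drift matrix `A = [[0,1],[0,θ]]` with `θ ≠ 0` and
`h = (0,1)ᵀ`, for every `t ≥ 0` (the integral being taken entrywise):
`∫_0^t e^{A(t-u)} h hᵀ (e^{A(t-u)})ᵀ du
  = ((e^{2θt}-1)/(2θ)) [[1/θ², 1/θ],[1/θ, 1]]
    + ((e^{θt}-1)/θ) [[-2/θ², -1/θ],[-1/θ, 0]] + t [[1/θ², 0],[0, 0]]`. -/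
theorem langevin_covariance_integral
    (θ : ℝ) (hθ : θ ≠ 0)
    (A : Matrix (Fin 2) (Fin 2) ℝ) (hA : A = !![0, 1; 0, θ])
    (h : Fin 2 → ℝ) (hh : h = ![0, 1]) :
    ∀ t : ℝ, 0 ≤ t →
      (Matrix.of fun i j : Fin 2 =>
          ∫ u in (0:ℝ)..t,
            ((NormedSpace.exp ((t - u) • A)) * vecMulVec h h
              * (NormedSpace.exp ((t - u) • A))ᵀ) i j)
        = ((Real.exp (2 * θ * t) - 1) / (2 * θ)) • !![1/θ^2, 1/θ; 1/θ, 1]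
          + ((Real.exp (θ * t) - 1) / θ) • !![-2/θ^2, -1/θ; -1/θ, 0]
          + t • !![1/θ^2, 0; 0, 0] := by
  intro t ht
  have hvv : vecMulVec h h = !![0,0;0,1] := by
    rw [hh]
    ext i j
    fin_cases i <;> fin_cases j <;> simp [vecMulVec_apply]
  have hsq : ∀ u : ℝ, Real.exp ((t-u)*(2*θ)) = Real.exp ((t-u)*θ) * Real.exp ((t-u)*θ) := by
    intro u
    rw [← Real.exp_add]
    ring_nf
  have hprod : ∀ u : ℝ,
      (NormedSpace.exp ((t - u) • A) * vecMulVec h h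
        * (NormedSpace.exp ((t - u) • A))ᵀ)
      = !![(1/θ^2) * Real.exp ((t-u)*(2*θ)) + (-2/θ^2) * Real.exp ((t-u)*θ) + 1/θ^2,
           (1/θ) * Real.exp ((t-u)*(2*θ)) + (-1/θ) * Real.exp ((t-u)*θ) + 0;
           (1/θ) * Real.exp ((t-u)*(2*θ)) + (-1/θ) * Real.exp ((t-u)*θ) + 0,
           (1:ℝ) * Real.exp ((t-u)*(2*θ)) + 0 * Real.exp ((t-u)*θ) + 0] := by
    intro u
    rw [hA, expA θ hθ (t-u), hvv]
    ext i j
    fin_cases i <;> fin_cases j <;>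
      · simp [Matrix.mul_apply, Matrix.transpose_apply, Matrix.vecHead, Matrix.vecTail,
          Fin.sum_univ_two, hsq u]
        try field_simp
        try ring
  have I : ∀ c : ℝ, c ≠ 0 → ∫ u in (0:ℝ)..t, Real.exp ((t-u)*c) = (Real.exp (t*c) - 1)/c := by
    intro c hc
    rw [intervalIntegral.integral_comp_sub_left (fun s => Real.exp (s*c)) t]
    simp only [sub_self, sub_zero]
    rw [intervalIntegral.integral_comp_mul_right (fun x => Real.exp x) hc]
    simp [integral_exp, Real.exp_zero, smul_eq_mul]
    field_simp
  have lin : ∀ p q r : ℝ,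
      ∫ u in (0:ℝ)..t, (p * Real.exp ((t-u)*(2*θ)) + q * Real.exp ((t-u)*θ) + r)
        = p * ((Real.exp (t*(2*θ)) - 1)/(2*θ)) + q * ((Real.exp (t*θ) - 1)/θ) + r * t := by
    intro p q r
    have c1 : IntervalIntegrable (fun u => p * Real.exp ((t-u)*(2*θ))) MeasureTheory.volume 0 t := by
      apply Continuous.intervalIntegrable
      fun_prop
    have c2 : IntervalIntegrable (fun u => q * Real.exp ((t-u)*θ)) MeasureTheory.volume 0 t := by
      apply Continuous.intervalIntegrable
      fun_prop
    have c3 : IntervalIntegrable (fun u => (r:ℝ)) MeasureTheory.volume 0 t := by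
      apply Continuous.intervalIntegrable
      fun_prop
    rw [intervalIntegral.integral_add (c1.add c2) c3,
        intervalIntegral.integral_add c1 c2,
        intervalIntegral.integral_const_mul, intervalIntegral.integral_const_mul,
        intervalIntegral.integral_const,
        I (2*θ) (by simpa using hθ), I θ hθ]
    simp [smul_eq_mul]
    ring
  simp only [hprod]
  ext i j
  fin_cases i <;> fin_cases j <;>
    · simp only [Fin.zero_eta, Fin.mk_one, Matrix.of_apply, Matrix.cons_val', Matrix.cons_val_zero,
        Matrix.cons_val_one, Matrix.head_cons, Matrix.head_fin_const, Matrix.empty_val',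
        Matrix.cons_val_fin_one, Matrix.add_apply, Matrix.smul_apply, smul_eq_mul]
      rw [lin]
      rw [show t*(2*θ) = 2*θ*t by ring, show t*θ = θ*t by ring]
      try field_simp
      try ring
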